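/- Let P : Matrix n n ℂ → ℂ be a polynomial function of the matrix entries (the evaluation of a multivariate polynomial in the n² entries) which is invariant under conjugation: P(g M g⁻¹) = P(M) for all M ∈ Matrix n n ℂ and all invertible g. Then there exists a polynomial Q in n variables such that P(M) = Q(c_0(M), c_1(M), ..., c_{n-1}(M)) for all M, where c_0(M), ..., c_{n-1}(M) are the coefficients of the characteristic polynomial of M. -/

import Mathlib

open Matrix MvPolynomial

namespace Stmt7Aux

variable {n : ℕ}

lemma eval_aeval' {σ τ : Type*} (x : τ → ℂ) (g : σ → MvPolynomial τ ℂ)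
    (q : MvPolynomial σ ℂ) :
    eval x (aeval g q) = eval (fun s => eval x (g s)) q := by
  rw [aeval_def, eval_eval₂]
  have : (eval x).comp (algebraMap ℂ (MvPolynomial τ ℂ)) = RingHom.id ℂ := by
    ext r; simp
  rw [this, eval₂_id]

lemma charpoly_diag (v : Fin n → ℂ) :
    (Matrix.diagonal v).charpoly = ∏ i : Fin n, (Polynomial.X - Polynomial.C (v i)) := by
  rw [Matrix.charpoly_of_upperTriangular _ (Matrix.blockTriangular_diagonal v)]
  simp

lemma eval_esymm (v : Fin n → ℂ) (m : ℕ) :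
    eval v (esymm (Fin n) ℂ m) = (Finset.univ.val.map v).esymm m := by
  rw [Finset.esymm_map_val, esymm]; simp [eval_prod]

lemma coeff_charpoly_diag (v : Fin n → ℂ) {m : ℕ} (hm : m ≤ n) :
    (Matrix.diagonal v).charpoly.coeff (n - m) = (-1)^m * eval v (esymm (Fin n) ℂ m) := by
  classical
  have hcard : Multiset.card (Finset.univ.val.map v) = n := by simp
  have h := Multiset.prod_X_sub_C_coeff (Finset.univ.val.map v)
    (k := n - m) (by rw [hcard]; omega)
  rw [hcard] at h
  have hn : n - (n - m) = m := by omega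
  rw [hn] at h
  rw [charpoly_diag, eval_esymm, ← h]
  congr 1
  rw [Multiset.map_map, Finset.prod]
  rfl

set_option maxHeartbeats 1000000 in
/-- Converter: a symmetric polynomial is a polynomial in the
coefficients of the characteristic polynomial of the diagonal matrix. -/
lemma exists_Q_of_symm (S : MvPolynomial (Fin n) ℂ) (hS : S.IsSymmetric) :
    ∃ Q : MvPolynomial (Fin n) ℂ, ∀ v : Fin n → ℂ,
      eval v S = eval (fun i : Fin n => (Matrix.diagonal v).charpoly.coeff i) Q := by
  classical
  obtain ⟨R', hR'⟩ := esymmAlgHom_surjective (σ := Fin n) (n := n) ℂ (by simp)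
    ⟨S, (mem_symmetricSubalgebra S).mpr hS⟩
  have hS' : S = aeval (fun i : Fin n => esymm (Fin n) ℂ ((i : ℕ) + 1)) R' := by
    have := congrArg Subtype.val hR'
    rw [esymmAlgHom_apply] at this
    exact this.symm
  refine ⟨aeval (fun i : Fin n =>
    (C ((-1 : ℂ) ^ ((i : ℕ) + 1)) *
      X (⟨n - ((i : ℕ) + 1), by have := i.isLt; omega⟩ : Fin n))) R', ?_⟩
  intro v
  rw [hS', eval_aeval', eval_aeval']
  refine congrArg (fun f => eval f R') (funext fun i => ?_)
  have hm : (i : ℕ) + 1 ≤ n := i.isLt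
  have hc := coeff_charpoly_diag v hm
  simp only [_root_.map_mul, eval_C, eval_X]
  rw [hc, ← mul_assoc, ← pow_add]
  have : (-1:ℂ) ^ (((i:ℕ)+1) + ((i:ℕ)+1)) = 1 := by rw [← two_mul, pow_mul]; norm_num
  rw [this, one_mul]

/-- A root of the characteristic polynomial admits an eigenvector. -/
lemma exists_eigvec (M : Matrix (Fin n) (Fin n) ℂ) (μ : ℂ)
    (h : (Matrix.charpoly M).IsRoot μ) :
    ∃ w : Fin n → ℂ, w ≠ 0 ∧ M.mulVec w = μ • w := by
  classical
  have hdet : (Matrix.diagonal (fun _ : Fin n => μ) - M).det = 0 := by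
    have h1 : (Polynomial.evalRingHom μ) (Matrix.charpoly M) = 0 := h
    rw [Matrix.charpoly, RingHom.map_det] at h1
    convert h1 using 2
    ext i j
    by_cases hij : i = j
    · subst hij; simp [Matrix.charmatrix_apply_eq]
    · simp [Matrix.charmatrix_apply_ne _ _ _ hij, Matrix.diagonal_apply_ne _ hij]
  obtain ⟨w, hw0, hw⟩ := (Matrix.exists_mulVec_eq_zero_iff).mpr hdet
  refine ⟨w, hw0, ?_⟩
  have := hw
  rw [Matrix.sub_mulVec] at this
  have h2 : (Matrix.diagonal fun _ : Fin n => μ).mulVec w = μ • w := by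
    ext i
    simp [Matrix.mulVec_diagonal, Pi.smul_apply, smul_eq_mul]
  rw [h2] at this
  exact (sub_eq_zero.mp this).symm

/-- Diagonalizable case: conjugating to a diagonal matrix of eigenvalues. -/
lemma exists_conj_diag (M : Matrix (Fin n) (Fin n) ℂ) (mu : Fin n → ℂ)
    (hmu : Function.Injective mu)
    (hev : ∀ i, ∃ w : Fin n → ℂ, w ≠ 0 ∧ M.mulVec w = mu i • w) :
    ∃ g : (Matrix (Fin n) (Fin n) ℂ)ˣ,
      (↑g : Matrix (Fin n) (Fin n) ℂ) * M * (↑g⁻¹ : Matrix (Fin n) (Fin n) ℂ)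
        = Matrix.diagonal mu := by
  classical
  rcases Nat.eq_zero_or_pos n with hn | hn
  · subst hn
    exact ⟨1, Subsingleton.elim _ _⟩
  have : NeZero n := ⟨hn.ne'⟩
  choose w hw0 hw using hev
  set f : Module.End ℂ (Fin n → ℂ) := Matrix.mulVecLin M with hf
  have hevec : ∀ i, f.HasEigenvector (mu i) (w i) := by
    intro i
    refine ⟨Module.End.mem_eigenspace_iff.mpr ?_, hw0 i⟩
    simpa [hf] using hw i
  have li : LinearIndependent ℂ w :=
    Module.End.eigenvectors_linearIndependent' f mu hmu w hevec
  have hcard : Fintype.card (Fin n) = Module.finrank ℂ (Fin n → ℂ) := by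
    simp
  let b : Module.Basis (Fin n) ℂ (Fin n → ℂ) := basisOfLinearIndependentOfCardEqFinrank li hcard
  have hb : ⇑b = w := coe_basisOfLinearIndependentOfCardEqFinrank li hcard
  set A : Matrix (Fin n) (Fin n) ℂ := (Pi.basisFun ℂ (Fin n)).toMatrix ⇑b with hA
  have hAentry : ∀ i j, A i j = w j i := by
    intro i j
    simp [hA, Module.Basis.toMatrix_apply, hb]
  have : Invertible A := (Pi.basisFun ℂ (Fin n)).invertibleToMatrix b
  set u : (Matrix (Fin n) (Fin n) ℂ)ˣ := unitOfInvertible A with hu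
  have hMA : M * A = A * Matrix.diagonal mu := by
    ext i j
    rw [Matrix.mul_apply, Matrix.mul_diagonal]
    have : ∑ k, M i k * A k j = (M.mulVec (w j)) i := by
      rw [Matrix.mulVec]
      simp [dotProduct, hAentry]
    rw [this, hw j]
    simp [hAentry, mul_comm]
  refine ⟨u⁻¹, ?_⟩
  have hcoe : (↑u⁻¹ : Matrix (Fin n) (Fin n) ℂ) = ⅟A := rfl
  have hcoe2 : (↑(u⁻¹)⁻¹ : Matrix (Fin n) (Fin n) ℂ) = A := by rw [inv_inv]; rfl
  rw [hcoe, hcoe2, Matrix.mul_assoc, hMA, ← Matrix.mul_assoc, invOf_mul_self, Matrix.one_mul]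

/-- diagonal of permuted vector is a conjugate of the diagonal. -/
lemma perm_conj_diag (v : Fin n → ℂ) (σ : Equiv.Perm (Fin n)) :
    ∃ g : (Matrix (Fin n) (Fin n) ℂ)ˣ,
      (↑g : Matrix (Fin n) (Fin n) ℂ) * Matrix.diagonal v * (↑g⁻¹ : Matrix (Fin n) (Fin n) ℂ)
        = Matrix.diagonal (v ∘ σ) := by
  classical
  have hmul : ∀ (τ τ' : Equiv.Perm (Fin n)),
      ((τ.toPEquiv.toMatrix : Matrix (Fin n) (Fin n) ℂ)) * (τ'.toPEquiv.toMatrix)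
        = ((τ.trans τ').toPEquiv.toMatrix) := by
    intro τ τ'
    rw [← PEquiv.toMatrix_trans, ← Equiv.toPEquiv_trans]
  have hone : (((Equiv.refl (Fin n)).toPEquiv.toMatrix : Matrix (Fin n) (Fin n) ℂ)) = 1 := by
    rw [Equiv.toPEquiv_refl, PEquiv.toMatrix_refl]
  refine ⟨⟨σ.toPEquiv.toMatrix, (σ⁻¹ : Equiv.Perm (Fin n)).toPEquiv.toMatrix, ?_, ?_⟩, ?_⟩
  · rw [hmul]
    have : σ.trans (σ⁻¹ : Equiv.Perm (Fin n)) = Equiv.refl (Fin n) := by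
      ext x; simp [Equiv.Perm.inv_def]
    rw [this, hone]
  · rw [hmul]
    have : (σ⁻¹ : Equiv.Perm (Fin n)).trans σ = Equiv.refl (Fin n) := by
      ext x; simp [Equiv.Perm.inv_def]
    rw [this, hone]
  · show (σ.toPEquiv.toMatrix : Matrix (Fin n) (Fin n) ℂ) * Matrix.diagonal v *
      ((σ⁻¹ : Equiv.Perm (Fin n)).toPEquiv.toMatrix) = _
    rw [Matrix.mul_assoc, PEquiv.mul_toMatrix_toPEquiv, PEquiv.toMatrix_toPEquiv_mul]
    ext i j
    by_cases hij : i = j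
    · subst hij
      simp [Matrix.submatrix_apply, Equiv.Perm.inv_def]
    · simp only [Matrix.submatrix_apply, Function.comp_apply, id_eq]
      rw [Matrix.diagonal_apply_ne _ hij, Matrix.diagonal_apply_ne]
      intro hc
      apply hij
      have := congrArg σ.symm hc
      simpa [Equiv.Perm.inv_def] using this

/-- enumerate roots of the characteristic polynomial -/
lemma exists_roots_enum (M : Matrix (Fin n) (Fin n) ℂ) :
    ∃ mu : Fin n → ℂ,
      Matrix.charpoly M = ∏ i : Fin n, (Polynomial.X - Polynomial.C (mu i)) := by
  classical
  have hmonic := Matrix.charpoly_monic M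
  have hsplit : (Matrix.charpoly M).Splits := IsAlgClosed.splits _
  have hdeg : (Matrix.charpoly M).natDegree = n := by
    simp [Matrix.charpoly_natDegree_eq_dim]
  have hcard : Multiset.card (Matrix.charpoly M).roots = n := by
    exact ((Polynomial.splits_iff_card_roots).mp hsplit).trans hdeg
  set l := (Matrix.charpoly M).roots.toList with hl
  have hlen : l.length = n := by rw [hl, Multiset.length_toList, hcard]
  refine ⟨fun i => l.get (Fin.cast hlen.symm i), ?_⟩
  have hfact := hsplit.eq_prod_roots_of_monic hmonic
  rw [hfact, ← Multiset.coe_toList (Matrix.charpoly M).roots, ← hl]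
  rw [Multiset.map_coe, Multiset.prod_coe]
  rw [← List.prod_ofFn]
  congr 1
  apply List.ext_getElem
  · simp [hlen]
  · intro k h1 h2
    simp [List.getElem_ofFn]

end Stmt7Aux

open Stmt7Aux in
set_option maxHeartbeats 1000000 in
/-- Every conjugation-invariant polynomial function on `n×n` complex matrices
is a polynomial in the coefficients of the characteristic polynomial. -/
theorem stmt7 (n : ℕ) (P : Matrix (Fin n) (Fin n) ℂ → ℂ)
    (hpoly : ∃ p : MvPolynomial (Fin n × Fin n) ℂ,
      ∀ M : Matrix (Fin n) (Fin n) ℂ,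
        P M = MvPolynomial.eval (fun ij : Fin n × Fin n => M ij.1 ij.2) p)
    (hinv : ∀ (M : Matrix (Fin n) (Fin n) ℂ) (g : (Matrix (Fin n) (Fin n) ℂ)ˣ),
      P ((g : Matrix (Fin n) (Fin n) ℂ) * M * ((g⁻¹ : _) : Matrix (Fin n) (Fin n) ℂ)) = P M) :
    ∃ Q : MvPolynomial (Fin n) ℂ,
      ∀ M : Matrix (Fin n) (Fin n) ℂ,
        P M = MvPolynomial.eval (fun i : Fin n => (Matrix.charpoly M).coeff i) Q := by
  classical
  obtain ⟨p, hp⟩ := hpoly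
  -- the restriction of `P` to diagonal matrices, as a polynomial in `n` variables
  set S : MvPolynomial (Fin n) ℂ :=
    aeval (fun ij : Fin n × Fin n =>
      if ij.1 = ij.2 then (X ij.1 : MvPolynomial (Fin n) ℂ) else 0) p with hSdef
  have hSeval : ∀ v : Fin n → ℂ, eval v S = P (Matrix.diagonal v) := by
    intro v
    rw [hSdef, eval_aeval']
    rw [hp (Matrix.diagonal v)]
    refine congrArg (fun f => eval f p) (funext fun ij => ?_)
    by_cases hij : ij.1 = ij.2
    · simp [hij, Matrix.diagonal_apply, eval_X]
    · simp [hij, Matrix.diagonal_apply_ne _ hij]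
  have hSsym : S.IsSymmetric := by
    intro σ
    apply MvPolynomial.funext
    intro v
    rw [eval_rename, hSeval]
    show P (Matrix.diagonal (v ∘ σ)) = eval v S
    obtain ⟨g, hg⟩ := perm_conj_diag v σ
    rw [← hg, hinv, hSeval]
  obtain ⟨Q, hQ⟩ := exists_Q_of_symm S hSsym
  -- the discriminant polynomial
  set Δ : MvPolynomial (Fin n) ℂ :=
    ∏ q ∈ Finset.univ.offDiag, (X q.1 - X q.2) with hΔdef
  have hΔeval : ∀ v : Fin n → ℂ,
      eval v Δ = ∏ q ∈ Finset.univ.offDiag, (v q.1 - v q.2) := by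
    intro v
    rw [hΔdef, map_prod]
    refine Finset.prod_congr rfl fun q _ => ?_
    simp
  have hΔsym : Δ.IsSymmetric := by
    intro σ
    rw [hΔdef, map_prod]
    have h1 : ∀ q : Fin n × Fin n,
        (rename ⇑σ) (X q.1 - X q.2 : MvPolynomial (Fin n) ℂ) = X (σ q.1) - X (σ q.2) := by
      intro q; simp [map_sub]
    rw [Finset.prod_congr rfl fun q _ => h1 q]
    refine Finset.prod_equiv (Equiv.prodCongr σ σ) (fun q => ?_) (fun q _ => rfl)
    simp only [Finset.mem_offDiag, Finset.mem_univ, true_and, Equiv.prodCongr_apply,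
      Prod.map_fst, Prod.map_snd]
    constructor
    · intro h hc; exact h (σ.injective hc)
    · intro h hc; exact h (congrArg σ hc)
  obtain ⟨D, hD⟩ := exists_Q_of_symm Δ hΔsym
  -- the universal characteristic polynomial coefficients
  set c : Fin n → MvPolynomial (Fin n × Fin n) ℂ :=
    fun i => (Matrix.charpoly.univ ℂ (Fin n)).coeff (i : ℕ) with hcdef
  have hc : ∀ (M : Matrix (Fin n) (Fin n) ℂ) (i : Fin n),
      eval (fun ij : Fin n × Fin n => M ij.1 ij.2) (c i) = (Matrix.charpoly M).coeff (i : ℕ) := by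
    intro M i
    have h0 := Matrix.charpoly.univ_coeff_eval₂Hom (Fin n) (RingHom.id ℂ)
      (fun ij : Fin n × Fin n => M ij.1 ij.2) (i : ℕ)
    have hM : Matrix.of (Function.curry fun ij : Fin n × Fin n => M ij.1 ij.2) = M := by
      ext i j; rfl
    rw [hM] at h0
    exact h0
  -- the key vanishing identity
  have hkey : (p - aeval c Q) * aeval c D = 0 := by
    apply MvPolynomial.funext
    intro x
    set M : Matrix (Fin n) (Fin n) ℂ := Matrix.of (Function.curry x) with hMdef
    have hxM : (fun ij : Fin n × Fin n => M ij.1 ij.2) = x := by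
      funext ij; rfl
    obtain ⟨mu, hmu⟩ := exists_roots_enum M
    have hcp : Matrix.charpoly M = Matrix.charpoly (Matrix.diagonal mu) := by
      rw [hmu, charpoly_diag]
    have e0 : eval x p = P M := by rw [hp M, hxM]
    have e1 : eval x (aeval c Q) = eval (fun i : Fin n => (Matrix.charpoly M).coeff (i:ℕ)) Q := by
      rw [eval_aeval']
      refine congrArg (fun f => eval f Q) (funext fun i => ?_)
      rw [← hxM, hc M i]
    have e2 : eval x (aeval c D) = eval mu Δ := by
      rw [eval_aeval']
      have : (fun i : Fin n => eval x (c i))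
          = fun i : Fin n => (Matrix.charpoly (Matrix.diagonal mu)).coeff (i:ℕ) := by
        funext i
        rw [← hxM, hc M i, hcp]
      rw [this, ← hD mu]
    rw [_root_.map_mul, map_sub, e0, e1, e2, map_zero]
    by_cases hinj : Function.Injective mu
    · have hPM : P M = eval (fun i : Fin n => (Matrix.charpoly M).coeff (i:ℕ)) Q := by
        have hroot : ∀ i, (Matrix.charpoly M).IsRoot (mu i) := by
          intro i
          rw [hmu]
          rw [Polynomial.IsRoot, Polynomial.eval_prod]
          refine Finset.prod_eq_zero (Finset.mem_univ i) ?_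
          simp
        have hev : ∀ i, ∃ w : Fin n → ℂ, w ≠ 0 ∧ M.mulVec w = mu i • w :=
          fun i => exists_eigvec M (mu i) (hroot i)
        obtain ⟨g, hg⟩ := exists_conj_diag M mu hinj hev
        have hPdiag : P (Matrix.diagonal mu) = P M := by
          rw [← hg]; exact hinv M g
        calc P M = P (Matrix.diagonal mu) := hPdiag.symm
          _ = eval mu S := (hSeval mu).symm
          _ = eval (fun i : Fin n => (Matrix.charpoly (Matrix.diagonal mu)).coeff (i:ℕ)) Q :=
              hQ mu
          _ = eval (fun i : Fin n => (Matrix.charpoly M).coeff (i:ℕ)) Q := by rw [← hcp]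
      rw [hPM, sub_self, zero_mul]
    · have hz : eval mu Δ = 0 := by
        obtain ⟨a, b, hab, hne⟩ := Function.not_injective_iff.mp hinj
        rw [hΔeval]
        refine Finset.prod_eq_zero (i := (a, b)) ?_ ?_
        · simp [Finset.mem_offDiag, hne]
        · simp [hab, sub_eq_zero]
      rw [hz, mul_zero]
  -- the discriminant polynomial is nonzero
  have hD0 : aeval c D ≠ 0 := by
    intro h0
    set w : Fin n → ℂ := fun i => ((i : ℕ) : ℂ) with hw
    have h1 := congrArg (eval (fun ij : Fin n × Fin n => (Matrix.diagonal w) ij.1 ij.2)) h0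
    rw [eval_aeval', map_zero] at h1
    have h2 : (fun i : Fin n => eval (fun ij : Fin n × Fin n => (Matrix.diagonal w) ij.1 ij.2) (c i))
        = fun i : Fin n => (Matrix.charpoly (Matrix.diagonal w)).coeff (i:ℕ) := by
      funext i
      exact hc (Matrix.diagonal w) i
    rw [h2, ← hD w, hΔeval] at h1
    have h3 : ∀ q ∈ Finset.univ.offDiag (α := Fin n), w q.1 - w q.2 ≠ 0 := by
      intro q hq
      rw [Finset.mem_offDiag] at hq
      rw [sub_ne_zero, hw]
      intro hc'
      exact hq.2.2 (Fin.ext (Nat.cast_injective hc'))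
    exact (Finset.prod_ne_zero_iff.mpr h3) h1
  rcases mul_eq_zero.mp hkey with h | h
  · refine ⟨Q, fun M => ?_⟩
    have hpQ : p = aeval c Q := sub_eq_zero.mp h
    rw [hp M, hpQ, eval_aeval']
    refine congrArg (fun f => eval f Q) (funext fun i => ?_)
    exact hc M i
  · exact absurd h hD0
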